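/- Fix z ∈ ℂ with |z| ≤ 1 and a positive integer h. Define the multiplicative-sum S(n) = ∑_{ℓ ≥ 1, n | ℓ} μ(ℓ)^2 (z-1)^{ω(ℓ)} gcd(ℓ,h)/(ℓ φ(ℓ)) for squarefree n. Then S(n) = (z-1)^{ω(n)} · (gcd(n,h)/(n φ(n))) · ∏_{q prime, q ∤ n} (1 + (z-1) gcd(q,h)/(q(q-1))). -/

import Mathlib

open ArithmeticFunction Finset

noncomputable def auxF (z : ℂ) (h : ℕ) (ℓ : ℕ) : ℂ :=
  (ArithmeticFunction.moebius ℓ : ℂ) ^ 2 * (z - 1) ^ ℓ.primeFactors.card * (Nat.gcd ℓ h : ℂ)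
    / ((ℓ : ℂ) * (Nat.totient ℓ : ℂ))

lemma auxF_zero (z : ℂ) (h : ℕ) : auxF z h 0 = 0 := by simp [auxF]

lemma auxF_one (z : ℂ) (h : ℕ) : auxF z h 1 = 1 := by simp [auxF]

lemma auxF_not_squarefree (z : ℂ) (h : ℕ) {ℓ : ℕ} (hl : ¬ Squarefree ℓ) :
    auxF z h ℓ = 0 := by
  simp [auxF, ArithmeticFunction.moebius_eq_zero_of_not_squarefree hl]

lemma auxF_mul (z : ℂ) (h : ℕ) {a b : ℕ} (hab : Nat.Coprime a b) :
    auxF z h (a * b) = auxF z h a * auxF z h b := by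
  rcases eq_or_ne a 0 with rfl | ha0
  · have hb : b = 1 := by simpa [Nat.coprime_zero_left] using hab
    subst hb; simp [auxF_zero, auxF_one]
  rcases eq_or_ne b 0 with rfl | hb0
  · have ha : a = 1 := by simpa [Nat.coprime_zero_right] using hab
    subst ha; simp [auxF_zero, auxF_one]
  by_cases hsq : Squarefree (a * b)
  · obtain ⟨-, hsa, hsb⟩ := Nat.squarefree_mul_iff.mp hsq
    have hμab : ((ArithmeticFunction.moebius (a * b) : ℤ) : ℂ) ^ 2 = 1 := by
      rw [← Int.cast_pow, ArithmeticFunction.moebius_sq_eq_one_of_squarefree hsq]; norm_num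
    have hμa : ((ArithmeticFunction.moebius a : ℤ) : ℂ) ^ 2 = 1 := by
      rw [← Int.cast_pow, ArithmeticFunction.moebius_sq_eq_one_of_squarefree hsa]; norm_num
    have hμb : ((ArithmeticFunction.moebius b : ℤ) : ℂ) ^ 2 = 1 := by
      rw [← Int.cast_pow, ArithmeticFunction.moebius_sq_eq_one_of_squarefree hsb]; norm_num
    unfold auxF
    rw [hμab, hμa, hμb, hab.primeFactors_mul,
      Finset.card_union_of_disjoint hab.disjoint_primeFactors,
      Nat.gcd_comm (a * b) h, hab.gcd_mul h, Nat.gcd_comm h a, Nat.gcd_comm h b,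
      Nat.totient_mul hab, pow_add]
    push_cast
    have h1 : (a : ℂ) ≠ 0 := Nat.cast_ne_zero.mpr ha0
    have h2 : (b : ℂ) ≠ 0 := Nat.cast_ne_zero.mpr hb0
    have h3 : (Nat.totient a : ℂ) ≠ 0 :=
      Nat.cast_ne_zero.mpr (Nat.totient_pos.mpr (Nat.pos_of_ne_zero ha0)).ne'
    have h4 : (Nat.totient b : ℂ) ≠ 0 :=
      Nat.cast_ne_zero.mpr (Nat.totient_pos.mpr (Nat.pos_of_ne_zero hb0)).ne'
    field_simp
  · rw [auxF_not_squarefree z h hsq]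
    rcases (not_and_or.mp fun hc : Squarefree a ∧ Squarefree b =>
        hsq (Nat.squarefree_mul_iff.mpr ⟨hab, hc.1, hc.2⟩)) with hna | hnb
    · rw [auxF_not_squarefree z h hna, zero_mul]
    · rw [auxF_not_squarefree z h hnb, mul_zero]

lemma small_primes_bound : ∀ S ∈ ({2,3,5} : Finset ℕ).powerset,
    ∏ p ∈ S, (4 * p) ≤ 64 * (∏ p ∈ S, (p - 1)) ^ 2 := by decide

lemma prod_primes_bound (P : Finset ℕ) (hP : ∀ p ∈ P, p.Prime) :
    ∏ p ∈ P, (4 * p) ≤ 64 * (∏ p ∈ P, (p - 1)) ^ 2 := by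
  classical
  rw [← Finset.prod_filter_mul_prod_filter_not P (· ≤ 5) (fun p => 4 * p),
      ← Finset.prod_filter_mul_prod_filter_not P (· ≤ 5) (fun p => p - 1)]
  have hsmall : ∏ p ∈ P.filter (· ≤ 5), (4 * p)
      ≤ 64 * (∏ p ∈ P.filter (· ≤ 5), (p - 1)) ^ 2 := by
    apply small_primes_bound
    rw [Finset.mem_powerset]
    intro p hp
    rw [Finset.mem_filter] at hp
    have h2p := (hP p hp.1).two_le
    have h5p : p ≤ 5 := hp.2
    have := hP p hp.1
    interval_cases p <;> simp_all (config := {decide := true})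
  have hlarge : ∏ p ∈ P.filter (¬ · ≤ 5), (4 * p)
      ≤ (∏ p ∈ P.filter (¬ · ≤ 5), (p - 1)) ^ 2 := by
    rw [← Finset.prod_pow]
    apply Finset.prod_le_prod'
    intro p hp
    rw [Finset.mem_filter] at hp
    have h6 : 6 ≤ p := by omega
    have : p - 1 + 1 = p := by omega
    nlinarith [sq_nonneg (p - 1), this]
  calc (∏ p ∈ P.filter (· ≤ 5), (4 * p)) * ∏ p ∈ P.filter (¬ · ≤ 5), (4 * p)
      ≤ (64 * (∏ p ∈ P.filter (· ≤ 5), (p - 1)) ^ 2) *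
        (∏ p ∈ P.filter (¬ · ≤ 5), (p - 1)) ^ 2 := Nat.mul_le_mul hsmall hlarge
    _ = 64 * ((∏ p ∈ P.filter (· ≤ 5), (p - 1)) * ∏ p ∈ P.filter (¬ · ≤ 5), (p - 1)) ^ 2 := by
        ring

lemma key_nat {ℓ : ℕ} (hl : Squarefree ℓ) :
    ℓ * 4 ^ ℓ.primeFactors.card ≤ 64 * (Nat.totient ℓ) ^ 2 := by
  have hl0 : ℓ ≠ 0 := hl.ne_zero
  have hprod : ∏ p ∈ ℓ.primeFactors, p = ℓ := Nat.prod_primeFactors_of_squarefree hl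
  have htot : Nat.totient ℓ = ∏ p ∈ ℓ.primeFactors, (p - 1) := by
    have := Nat.totient_mul_prod_primeFactors ℓ
    rw [hprod] at this
    exact Nat.eq_of_mul_eq_mul_left (Nat.pos_of_ne_zero hl0) (by linarith [this] )
  calc ℓ * 4 ^ ℓ.primeFactors.card
      = ∏ p ∈ ℓ.primeFactors, (4 * p) := by
        rw [Finset.prod_mul_distrib, Finset.prod_const, hprod, mul_comm]
    _ ≤ 64 * (∏ p ∈ ℓ.primeFactors, (p - 1)) ^ 2 :=
        prod_primes_bound _ (fun p hp => Nat.prime_of_mem_primeFactors hp)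
    _ = 64 * (Nat.totient ℓ) ^ 2 := by rw [htot]

lemma key_real {ℓ : ℕ} (hl : Squarefree ℓ) :
    (2 : ℝ) ^ ℓ.primeFactors.card * Real.sqrt ℓ ≤ 8 * Nat.totient ℓ := by
  have h1 : ((ℓ * 4 ^ ℓ.primeFactors.card : ℕ) : ℝ) ≤ ((64 * (Nat.totient ℓ) ^ 2 : ℕ) : ℝ) :=
    Nat.cast_le.mpr (key_nat hl)
  push_cast at h1
  have h2 := Real.sqrt_le_sqrt h1
  have e1 : Real.sqrt ((ℓ : ℝ) * 4 ^ ℓ.primeFactors.card)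
      = 2 ^ ℓ.primeFactors.card * Real.sqrt ℓ := by
    rw [mul_comm, show (4 : ℝ) ^ ℓ.primeFactors.card = (2 ^ ℓ.primeFactors.card) ^ 2 by
        rw [← pow_mul, pow_mul']; norm_num,
      Real.sqrt_mul (by positivity), Real.sqrt_sq (by positivity)]
  have e2 : Real.sqrt ((64 : ℝ) * (Nat.totient ℓ : ℝ) ^ 2)
      = 8 * Nat.totient ℓ := by
    rw [show (64 : ℝ) = 8 ^ 2 by norm_num, ← mul_pow, Real.sqrt_sq (by positivity)]
  rw [e1, e2] at h2
  exact h2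

lemma auxF_norm_le (z : ℂ) (hz : ‖z‖ ≤ 1) (h : ℕ) (hh : 0 < h) (ℓ : ℕ) :
    ‖auxF z h ℓ‖ ≤ 8 * h * (1 / (ℓ : ℝ) ^ ((3 : ℝ) / 2)) := by
  by_cases hsf : Squarefree ℓ
  · have hl0 : ℓ ≠ 0 := hsf.ne_zero
    have hlpos : (0 : ℝ) < (ℓ : ℝ) := by exact_mod_cast Nat.pos_of_ne_zero hl0
    have hφpos : (0 : ℝ) < (Nat.totient ℓ : ℝ) := by
      exact_mod_cast Nat.totient_pos.mpr (Nat.pos_of_ne_zero hl0)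
    have hμ : ‖((ArithmeticFunction.moebius ℓ : ℤ) : ℂ)‖ = 1 := by
      have h2 : ((ArithmeticFunction.moebius ℓ : ℤ) : ℂ) ^ 2 = 1 := by
        rw [← Int.cast_pow, ArithmeticFunction.moebius_sq_eq_one_of_squarefree hsf]; norm_num
      have h3 : ‖((ArithmeticFunction.moebius ℓ : ℤ) : ℂ)‖ ^ 2 = 1 := by
        rw [← norm_pow, h2, norm_one]
      nlinarith [norm_nonneg ((ArithmeticFunction.moebius ℓ : ℤ) : ℂ)]
    have hznorm : ‖z - 1‖ ≤ 2 := by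
      calc ‖z - 1‖ ≤ ‖z‖ + ‖(1 : ℂ)‖ := norm_sub_le z 1
        _ ≤ 2 := by rw [norm_one]; linarith
    have hgcd : (Nat.gcd ℓ h : ℝ) ≤ (h : ℝ) :=
      Nat.cast_le.mpr (Nat.le_of_dvd hh (Nat.gcd_dvd_right ℓ h))
    have hnorm : ‖auxF z h ℓ‖
        = ‖z - 1‖ ^ ℓ.primeFactors.card * (Nat.gcd ℓ h : ℝ)
          / ((ℓ : ℝ) * (Nat.totient ℓ : ℝ)) := by
      rw [auxF, norm_div, norm_mul, norm_mul, norm_pow, norm_pow, hμ, one_pow, one_mul,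
        norm_mul]
      simp [Complex.norm_natCast]
    rw [hnorm]
    have hrpow : (ℓ : ℝ) ^ ((3 : ℝ) / 2) = (ℓ : ℝ) * Real.sqrt ℓ := by
      rw [show (3 : ℝ) / 2 = 1 + 1 / 2 by norm_num, Real.rpow_add hlpos, Real.rpow_one,
        ← Real.sqrt_eq_rpow]
    rw [hrpow]
    have hsqrtpos : (0 : ℝ) < Real.sqrt ℓ := Real.sqrt_pos.mpr hlpos
    have step1 : ‖z - 1‖ ^ ℓ.primeFactors.card * (Nat.gcd ℓ h : ℝ)
        / ((ℓ : ℝ) * (Nat.totient ℓ : ℝ))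
        ≤ (2 : ℝ) ^ ℓ.primeFactors.card * (h : ℝ) / ((ℓ : ℝ) * (Nat.totient ℓ : ℝ)) := by
      gcongr
    refine step1.trans ?_
    rw [div_le_iff₀ (by positivity), one_div]
    have key := key_real hsf
    have key2 : (2 : ℝ) ^ ℓ.primeFactors.card ≤ 8 * (Nat.totient ℓ : ℝ) * (Real.sqrt ℓ)⁻¹ := by
      calc (2 : ℝ) ^ ℓ.primeFactors.card
          = 2 ^ ℓ.primeFactors.card * Real.sqrt ℓ * (Real.sqrt ℓ)⁻¹ := by
            field_simp
        _ ≤ 8 * (Nat.totient ℓ : ℝ) * (Real.sqrt ℓ)⁻¹ := by gcongr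
    have expand : 8 * (h : ℝ) * ((ℓ : ℝ) * ((ℓ : ℝ) * Real.sqrt ℓ)⁻¹ * (Nat.totient ℓ : ℝ))
        = (8 * (Nat.totient ℓ : ℝ) * (Real.sqrt ℓ)⁻¹) * (h : ℝ) := by
      field_simp
    calc (2 : ℝ) ^ ℓ.primeFactors.card * (h : ℝ)
        ≤ (8 * (Nat.totient ℓ : ℝ) * (Real.sqrt ℓ)⁻¹) * (h : ℝ) := by
          gcongr
      _ = 8 * (h : ℝ) * ((ℓ : ℝ) * Real.sqrt ℓ)⁻¹ * ((ℓ : ℝ) * (Nat.totient ℓ : ℝ)) := by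
          field_simp
  · rw [auxF_not_squarefree z h hsf, norm_zero]
    positivity

theorem stmt_8 (z : ℂ) (hz : ‖z‖ ≤ 1) (h : ℕ) (hh : 0 < h) (n : ℕ) (hn : Squarefree n) :
    (∑' ℓ : ℕ, if n ∣ ℓ then
        (ArithmeticFunction.moebius ℓ : ℂ) ^ 2 * (z - 1) ^ ℓ.primeFactors.card
          * (Nat.gcd ℓ h : ℂ) / ((ℓ : ℂ) * (Nat.totient ℓ : ℂ))
      else 0)
    = (z - 1) ^ n.primeFactors.card * (Nat.gcd n h : ℂ) / ((n : ℂ) * (Nat.totient n : ℂ))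
      * ∏' q : {q : ℕ // q.Prime ∧ ¬ q ∣ n},
          (1 + (z - 1) * (Nat.gcd (q : ℕ) h : ℂ) / (((q : ℕ) : ℂ) * (((q : ℕ) : ℂ) - 1))) := by
  classical
  have hn0 : n ≠ 0 := hn.ne_zero
  set G : ℕ → ℂ := fun m => if Nat.Coprime m n then auxF z h m else 0 with hG
  have hG1 : G 1 = 1 := by simp [hG, Nat.coprime_one_left, auxF_one]
  have hG0 : G 0 = 0 := by
    by_cases h0 : Nat.Coprime 0 n
    · simp [hG, h0, auxF_zero]
    · simp [hG, h0]
  have hGmul : ∀ {a b : ℕ}, Nat.Coprime a b → G (a * b) = G a * G b := by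
    intro a b hab
    simp only [hG]
    by_cases hca : Nat.Coprime a n <;> by_cases hcb : Nat.Coprime b n
    · rw [if_pos (Nat.coprime_mul_iff_left.mpr ⟨hca, hcb⟩), if_pos hca, if_pos hcb,
        auxF_mul z h hab]
    · rw [if_neg (fun hc => hcb (Nat.coprime_mul_iff_left.mp hc).2), if_pos hca,
        if_neg hcb, mul_zero]
    · rw [if_neg (fun hc => hca (Nat.coprime_mul_iff_left.mp hc).1), if_neg hca,
        if_pos hcb, zero_mul]
    · rw [if_neg (fun hc => hca (Nat.coprime_mul_iff_left.mp hc).1), if_neg hca, zero_mul]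
  have hGsum : Summable (fun m => ‖G m‖) := by
    have hb : Summable (fun m : ℕ => 8 * (h : ℝ) * (1 / (m : ℝ) ^ ((3 : ℝ) / 2))) :=
      (Real.summable_one_div_nat_rpow.mpr (by norm_num : (1:ℝ) < 3/2)).mul_left (8 * (h : ℝ))
    refine Summable.of_nonneg_of_le (fun m => norm_nonneg _) (fun m => ?_) hb
    simp only [hG]
    split
    · exact auxF_norm_le z hz h hh m
    · rw [norm_zero]; positivity
  have euler := EulerProduct.eulerProduct_tprod hG1 hGmul hGsum hG0
  have hinner : ∀ p : Nat.Primes, (∑' e : ℕ, G ((p : ℕ) ^ e)) = 1 + G (p : ℕ) := by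
    intro p
    have hzero : ∀ e ∉ ({0, 1} : Finset ℕ), G ((p : ℕ) ^ e) = 0 := by
      intro e he
      simp only [Finset.mem_insert, Finset.mem_singleton] at he
      push_neg at he
      have hμ := ArithmeticFunction.moebius_apply_prime_pow p.2 he.1
      rw [if_neg he.2] at hμ
      have haux : auxF z h ((p : ℕ) ^ e) = 0 := by simp [auxF, hμ]
      simp only [hG]
      split <;> simp [haux]
    rw [tsum_eq_sum hzero, Finset.sum_pair (by norm_num : (0 : ℕ) ≠ 1), pow_zero, pow_one, hG1]
  set e : {q : ℕ // q.Prime ∧ ¬ q ∣ n} → Nat.Primes := fun q => ⟨q.1, q.2.1⟩ with he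
  have he_inj : Function.Injective e := by
    intro q1 q2 hq
    exact Subtype.ext (congrArg (fun p : Nat.Primes => (p : ℕ)) hq)
  have hsupp2 : Function.mulSupport (fun p : Nat.Primes => 1 + G (p : ℕ)) ⊆ Set.range e := by
    intro p hp
    by_cases hdvd : (p : ℕ) ∣ n
    · exfalso
      apply hp
      have hnc : ¬ Nat.Coprime (p : ℕ) n := by
        rw [Nat.Prime.coprime_iff_not_dvd p.2]; exact not_not_intro hdvd
      simp [hG, hnc]
    · exact ⟨⟨(p : ℕ), p.2, hdvd⟩, Subtype.ext rfl⟩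
  have hprodeq := he_inj.tprod_eq hsupp2
  have hfactor : ∀ q : {q : ℕ // q.Prime ∧ ¬ q ∣ n},
      1 + G ((e q : ℕ)) = 1 + (z - 1) * (Nat.gcd (q : ℕ) h : ℂ)
        / (((q : ℕ) : ℂ) * (((q : ℕ) : ℂ) - 1)) := by
    rintro ⟨q, hq, hqn⟩
    simp only [hG, he]
    rw [if_pos (hq.coprime_iff_not_dvd.mpr hqn)]
    congr 1
    rw [auxF, ArithmeticFunction.moebius_apply_prime hq, hq.primeFactors,
      Finset.card_singleton, Nat.totient_prime hq, Nat.cast_sub hq.one_lt.le]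
    push_cast
    ring
  have hT : ∀ ℓ, (if n ∣ ℓ then
        (ArithmeticFunction.moebius ℓ : ℂ) ^ 2 * (z - 1) ^ ℓ.primeFactors.card
          * (Nat.gcd ℓ h : ℂ) / ((ℓ : ℂ) * (Nat.totient ℓ : ℂ))
      else 0) = (if n ∣ ℓ then auxF z h ℓ else 0) := fun ℓ => rfl
  have hinj : Function.Injective (fun m : ℕ => n * m) := mul_right_injective₀ hn0
  have hsupp : (Function.support fun ℓ => if n ∣ ℓ then auxF z h ℓ else 0)
      ⊆ Set.range (fun m : ℕ => n * m) := by
    intro ℓ hℓ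
    by_cases hd : n ∣ ℓ
    · obtain ⟨m, rfl⟩ := hd
      exact ⟨m, rfl⟩
    · simp [Function.mem_support, hd] at hℓ
  have stepA := hinj.tsum_eq hsupp
  have hTnm : ∀ m : ℕ, (if n ∣ n * m then auxF z h (n * m) else 0) = auxF z h n * G m := by
    intro m
    rw [if_pos ⟨m, rfl⟩]
    by_cases hc : Nat.Coprime n m
    · rw [auxF_mul z h hc]
      simp only [hG]
      rw [if_pos hc.symm]
    · simp only [hG]
      rw [if_neg (fun hmn => hc (Nat.Coprime.symm hmn)), mul_zero]
      rcases eq_or_ne m 0 with rfl | hm0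
      · rw [mul_zero, auxF_zero]
      · exact auxF_not_squarefree z h (fun hsq => hc (Nat.squarefree_mul_iff.mp hsq).1)
  have hμn : ((ArithmeticFunction.moebius n : ℤ) : ℂ) ^ 2 = 1 := by
    rw [← Int.cast_pow, ArithmeticFunction.moebius_sq_eq_one_of_squarefree hn]; norm_num
  calc (∑' ℓ : ℕ, if n ∣ ℓ then
        (ArithmeticFunction.moebius ℓ : ℂ) ^ 2 * (z - 1) ^ ℓ.primeFactors.card
          * (Nat.gcd ℓ h : ℂ) / ((ℓ : ℂ) * (Nat.totient ℓ : ℂ))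
      else 0)
      = ∑' ℓ : ℕ, (if n ∣ ℓ then auxF z h ℓ else 0) := tsum_congr hT
    _ = ∑' m : ℕ, (if n ∣ n * m then auxF z h (n * m) else 0) := stepA.symm
    _ = ∑' m : ℕ, auxF z h n * G m := tsum_congr hTnm
    _ = auxF z h n * ∑' m : ℕ, G m := tsum_mul_left
    _ = auxF z h n * ∏' p : Nat.Primes, (1 + G (p : ℕ)) := by
        rw [← euler, tprod_congr hinner]
    _ = auxF z h n * ∏' q : {q : ℕ // q.Prime ∧ ¬ q ∣ n},
          (1 + (z - 1) * (Nat.gcd (q : ℕ) h : ℂ) / (((q : ℕ) : ℂ) * (((q : ℕ) : ℂ) - 1))) := by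
        rw [← hprodeq, tprod_congr hfactor]
    _ = (z - 1) ^ n.primeFactors.card * (Nat.gcd n h : ℂ) / ((n : ℂ) * (Nat.totient n : ℂ))
      * ∏' q : {q : ℕ // q.Prime ∧ ¬ q ∣ n},
          (1 + (z - 1) * (Nat.gcd (q : ℕ) h : ℂ) / (((q : ℕ) : ℂ) * (((q : ℕ) : ℂ) - 1))) := by
        rw [auxF, hμn, one_mul]
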